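/- A differentiable function f : X → ℝ on a nonempty open set X ⊆ ℝⁿ is invex if and only if every stationary point of f (a point x* with ∇f(x*) = 0) is a global minimizer of f. -/

import Mathlib

open RealInnerProductSpace

/-- A differentiable function on a nonempty open set `X ⊆ ℝⁿ` is invex iff every
stationary point is a global minimizer. -/
theorem invex_iff_stationary_global_min {n : ℕ}
    (X : Set (EuclideanSpace ℝ (Fin n))) (hX : IsOpen X) (hXne : X.Nonempty)
    (f : EuclideanSpace ℝ (Fin n) → ℝ)
    (hf : ∀ x ∈ X, DifferentiableAt ℝ f x) :
    (∃ η : EuclideanSpace ℝ (Fin n) → EuclideanSpace ℝ (Fin n) → EuclideanSpace ℝ (Fin n),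
      ∀ x ∈ X, ∀ y ∈ X, f y - f x ≥ ⟪gradient f x, η x y⟫) ↔
    (∀ x ∈ X, gradient f x = 0 → ∀ y ∈ X, f x ≤ f y) := by
  constructor
  · rintro ⟨η, hη⟩ x hx hgrad y hy
    have := hη x hx y hy
    rw [hgrad] at this
    simp at this
    linarith
  · intro h
    refine ⟨fun x y => open scoped Classical in if hg : gradient f x = 0 then 0 else
      ((f y - f x) / ‖gradient f x‖ ^ 2) • gradient f x, fun x hx y hy => ?_⟩
    by_cases hg : gradient f x = 0
    · simp [hg]
      linarith [h x hx hg y hy]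
    · simp only [dif_neg hg]
      rw [inner_smul_right, real_inner_self_eq_norm_sq]
      have hn : ‖gradient f x‖ ^ 2 ≠ 0 := by
        simpa using fun h => hg (norm_eq_zero.mp (pow_eq_zero_iff two_ne_zero |>.mp h))
      field_simp
      exact le_rfl
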